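/- A finite subset S = {v₁,…,vₘ} of X₁ × ⋯ × Xₙ is good if and only if the rows of its 0-1 incidence matrix M (rows indexed by points of S, columns indexed by the symbols occurring as coordinates of points of S, with M(i,j) = 1 iff the j-th symbol occurs as a coordinate of vᵢ in the appropriate position) are linearly independent over ℚ. -/

import Mathlib

open scoped BigOperators

/-- S in an n-fold product (coordinates are natural-number "symbols") is good. -/
def IsGoodN {n : ℕ} (S : Set (Fin n → ℕ)) : Prop :=
  ∀ f : (Fin n → ℕ) → ℂ, ∃ u : Fin n → ℕ → ℂ, ∀ p ∈ S, f p = ∑ i, u i (p i)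

set_option maxHeartbeats 1000000 in
/-- for a finite set S whose coordinate projections are pairwise
disjoint, S is good iff the rows of its 0-1 incidence matrix (points vs. symbols)
are linearly independent over ℚ. -/
theorem stmt_2 {n : ℕ} (S : Finset (Fin n → ℕ))
    (hdisj : ∀ i j : Fin n, i ≠ j →
      Disjoint ((fun p : Fin n → ℕ => p i) '' (S : Set (Fin n → ℕ)))
               ((fun p : Fin n → ℕ => p j) '' (S : Set (Fin n → ℕ)))) :
    IsGoodN (S : Set (Fin n → ℕ)) ↔
      LinearIndependent ℚ (fun p : S => fun s : ℕ =>
        if ∃ k, (p : Fin n → ℕ) k = s then (1 : ℚ) else 0) := by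
  classical
  -- coordinates are "unique": a symbol determines its coordinate position
  have hunique : ∀ p ∈ S, ∀ q ∈ S, ∀ k l : Fin n, p k = q l → k = l := by
    intro p hp q hq k l hkl
    by_contra hne
    exact Set.disjoint_left.mp (hdisj k l hne) ⟨p, hp, rfl⟩ ⟨q, hq, hkl.symm⟩
  -- the finite set of symbols
  set T : Finset ℕ := S.biUnion (fun p => Finset.image p Finset.univ) with hT
  have hmemT : ∀ p ∈ S, ∀ k : Fin n, p k ∈ T := by
    intro p hp k
    exact Finset.mem_biUnion.mpr ⟨p, hp, Finset.mem_image_of_mem p (Finset.mem_univ k)⟩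
  constructor
  · -- good → linearly independent
    intro hgood
    rw [Fintype.linearIndependent_iff]
    intro g hg p0
    have hgs : ∀ s : ℕ, ∑ p : S, g p *
        (if ∃ k, (p : Fin n → ℕ) k = s then (1 : ℚ) else 0) = 0 := by
      intro s
      have := congrFun hg s
      simpa [Finset.sum_apply] using this
    -- indicator function of p0
    obtain ⟨u, hu⟩ := hgood (fun q => if q = (p0 : Fin n → ℕ) then (1 : ℂ) else 0)
    -- key: for each coordinate i, the weighted sum of u i (p i) vanishes
    have key : ∀ i : Fin n, ∑ p : S, (g p : ℂ) * u i ((p : Fin n → ℕ) i) = 0 := by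
      intro i
      set Ti : Finset ℕ := S.image (fun q => q i) with hTi
      have h1 : ∀ p : S, u i ((p : Fin n → ℕ) i)
          = ∑ s ∈ Ti, if (p : Fin n → ℕ) i = s then u i s else 0 := by
        intro p
        rw [Finset.sum_ite_eq]
        simp [hTi, Finset.mem_image.mpr ⟨(p : Fin n → ℕ), p.2, rfl⟩]
      calc ∑ p : S, (g p : ℂ) * u i ((p : Fin n → ℕ) i)
          = ∑ p : S, ∑ s ∈ Ti, (if (p : Fin n → ℕ) i = s then (g p : ℂ) else 0) * u i s := by
            refine Finset.sum_congr rfl fun p _ => ?_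
            rw [h1 p, Finset.mul_sum]
            refine Finset.sum_congr rfl fun s _ => ?_
            split_ifs <;> ring
        _ = ∑ s ∈ Ti, (∑ p : S, if (p : Fin n → ℕ) i = s then (g p : ℂ) else 0) * u i s := by
            rw [Finset.sum_comm]
            simp [Finset.sum_mul]
        _ = 0 := by
            refine Finset.sum_eq_zero fun s hs => ?_
            obtain ⟨q, hq, hqs⟩ := Finset.mem_image.mp hs
            have hcoef : ∑ p : S, (if (p : Fin n → ℕ) i = s then (g p : ℂ) else 0) = 0 := by
              calc ∑ p : S, (if (p : Fin n → ℕ) i = s then (g p : ℂ) else 0)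
                  = ((∑ p : S, g p *
                      (if ∃ k, (p : Fin n → ℕ) k = s then (1 : ℚ) else 0) : ℚ) : ℂ) := by
                    push_cast [apply_ite (fun q : ℚ => (q : ℂ))]
                    refine Finset.sum_congr rfl fun p _ => ?_
                    have hiff : ((p : Fin n → ℕ) i = s) ↔ (∃ k, (p : Fin n → ℕ) k = s) := by
                      constructor
                      · intro h; exact ⟨i, h⟩
                      · rintro ⟨k, hk⟩
                        have : k = i := hunique _ p.2 q hq k i (by rw [hk, hqs])
                        rw [← this, hk]
                    rw [if_congr hiff rfl rfl]
                    split_ifs <;> ring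
                _ = 0 := by rw [hgs s]; norm_num
            rw [hcoef, zero_mul]
    -- evaluate the weighted sum of the indicator in two ways
    have hsum : ∑ p : S, (g p : ℂ) *
        (if (p : Fin n → ℕ) = (p0 : Fin n → ℕ) then (1 : ℂ) else 0) = 0 := by
      calc ∑ p : S, (g p : ℂ) * (if (p : Fin n → ℕ) = (p0 : Fin n → ℕ) then (1 : ℂ) else 0)
          = ∑ p : S, (g p : ℂ) * ∑ i, u i ((p : Fin n → ℕ) i) := by
            refine Finset.sum_congr rfl fun p _ => ?_
            rw [← hu (p : Fin n → ℕ) p.2]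
        _ = ∑ p : S, ∑ i, (g p : ℂ) * u i ((p : Fin n → ℕ) i) :=
            Finset.sum_congr rfl fun p _ => Finset.mul_sum _ _ _
        _ = ∑ i, ∑ p : S, (g p : ℂ) * u i ((p : Fin n → ℕ) i) := Finset.sum_comm
        _ = 0 := Finset.sum_eq_zero fun i _ => key i
    have : ∑ p : S, (g p : ℂ) *
        (if (p : Fin n → ℕ) = (p0 : Fin n → ℕ) then (1 : ℂ) else 0) = (g p0 : ℂ) := by
      rw [Finset.sum_eq_single p0]
      · simp
      · intro p _ hne
        have : ¬ ((p : Fin n → ℕ) = (p0 : Fin n → ℕ)) := fun h => hne (Subtype.ext h)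
        simp [this]
      · intro h; exact absurd (Finset.mem_univ p0) h
    rw [hsum] at this
    exact_mod_cast this.symm
  · -- linearly independent → good
    intro hLI f
    -- the incidence matrix restricted to the symbol set T
    set M : Matrix S T ℚ :=
      fun p s => if ∃ k, (p : Fin n → ℕ) k = (s : ℕ) then (1 : ℚ) else 0 with hM
    have hMLI : LinearIndependent ℚ (fun p : S => M p) := by
      rw [Fintype.linearIndependent_iff] at hLI ⊢
      intro g hg
      apply hLI g
      funext s
      by_cases hs : s ∈ T
      · have := congrFun hg ⟨s, hs⟩
        simpa [Finset.sum_apply, hM] using this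
      · simp only [Finset.sum_apply, Pi.smul_apply, smul_eq_mul, Pi.zero_apply]
        refine Finset.sum_eq_zero fun p _ => ?_
        have : ¬ (∃ k, (p : Fin n → ℕ) k = s) := by
          rintro ⟨k, hk⟩
          exact hs (hk ▸ hmemT _ p.2 k)
        simp [this]
    -- the matrix has a right inverse over ℚ
    have hrank : M.rank = Fintype.card S := hMLI.rank_matrix
    have hsurj : Function.Surjective M.mulVec := by
      have hrange : LinearMap.range M.mulVecLin = ⊤ := by
        apply Submodule.eq_top_of_finrank_eq
        rw [← Matrix.rank, hrank, Module.finrank_pi]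
      intro y
      have : y ∈ LinearMap.range M.mulVecLin := by rw [hrange]; trivial
      obtain ⟨x, hx⟩ := this
      exact ⟨x, hx⟩
    obtain ⟨N, hN⟩ := Matrix.mulVec_surjective_iff_exists_right_inverse.mp hsurj
    -- move everything to ℂ
    set Mc : Matrix S T ℂ := M.map (Rat.cast : ℚ → ℂ) with hMc
    set Nc : Matrix T S ℂ := N.map (Rat.cast : ℚ → ℂ) with hNc
    have hMN : Mc * Nc = 1 := by
      have h1 : (M.map (Rat.castHom ℂ)) * (N.map (Rat.castHom ℂ)) = 1 := by
        rw [← Matrix.map_mul, hN, Matrix.map_one _ (map_zero _) (map_one _)]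
      rw [hMc, hNc]
      simpa using h1
    set w : T → ℂ := Nc.mulVec (fun p : S => f (p : Fin n → ℕ)) with hw
    have hMw : Mc.mulVec w = fun p : S => f (p : Fin n → ℕ) := by
      rw [hw, Matrix.mulVec_mulVec, hMN, Matrix.one_mulVec]
    -- extend w to all of ℕ
    set w' : ℕ → ℂ := fun s => if h : s ∈ T then w ⟨s, h⟩ else 0 with hw'
    refine ⟨fun _ s => w' s, ?_⟩
    intro p hp
    -- p has pairwise distinct coordinates
    have hpinj : Function.Injective p := fun k l hkl => hunique p hp p hp k l hkl
    have h2 : ∑ i, w' (p i) = ∑ s ∈ Finset.image p Finset.univ, w' s := by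
      rw [Finset.sum_image (fun k _ l _ h => hpinj h)]
    have himg : T.filter (fun s => ∃ k, p k = s) = Finset.image p Finset.univ := by
      ext s
      simp only [Finset.mem_filter, Finset.mem_image, Finset.mem_univ, true_and]
      constructor
      · rintro ⟨-, k, hk⟩; exact ⟨k, hk⟩
      · rintro ⟨k, hk⟩; exact ⟨hk ▸ hmemT p hp k, k, hk⟩
    have h3 : f p = ∑ s : T, (if ∃ k, p k = (s : ℕ) then (1 : ℂ) else 0) * w s := by
      have h := congrFun hMw ⟨p, hp⟩
      rw [← h]
      simp [Matrix.mulVec, dotProduct, hMc, hM, Matrix.map_apply, apply_ite]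
      refine Finset.sum_congr rfl fun s _ => ?_
      change ((if ∃ k, p k = (s : ℕ) then (1 : ℚ) else 0 : ℚ) : ℂ) * w s = _
      split_ifs <;> simp
    have h4 : ∑ s : T, (if ∃ k, p k = (s : ℕ) then (1 : ℂ) else 0) * w s
        = ∑ i, w' (p i) := by
      calc ∑ s : T, (if ∃ k, p k = (s : ℕ) then (1 : ℂ) else 0) * w s
          = ∑ s : T, (fun t => if ∃ k, p k = t then w' t else 0) (s : ℕ) := by
            refine Finset.sum_congr rfl fun s _ => ?_
            simp only [hw', Subtype.coe_eta, dif_pos s.2]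
            split_ifs <;> simp
        _ = ∑ s ∈ T, (if ∃ k, p k = s then w' s else 0) := by
            rw [Finset.univ_eq_attach]
            exact Finset.sum_attach T (fun t => if ∃ k, p k = t then w' t else 0)
        _ = ∑ s ∈ T.filter (fun s => ∃ k, p k = s), w' s := (Finset.sum_filter _ _).symm
        _ = ∑ i, w' (p i) := by
            rw [himg, Finset.sum_image (fun k _ l _ h => hpinj h)]
    rw [h3, h4]
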